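/- Let G be a connected claw-free cubic graph and let H be a connected component of G - B(G) with at least 5 vertices. Then the set X of vertices of H having degree 2 in H is an independent set in G. -/

import Mathlib

open SimpleGraph

/-- A graph is claw-free if it has no induced subgraph isomorphic to `K_{1,3}`. -/
def IsClawFree {V : Type*} (G : SimpleGraph V) : Prop :=
  ¬ ∃ v a b c : V, a ≠ b ∧ a ≠ c ∧ b ≠ c ∧
    G.Adj v a ∧ G.Adj v b ∧ G.Adj v c ∧ ¬ G.Adj a b ∧ ¬ G.Adj a c ∧ ¬ G.Adj b c

/-- `G - B(G)`: the graph obtained from `G` by deleting all of its bridges. -/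
def bridgeFree {V : Type*} (G : SimpleGraph V) : SimpleGraph V :=
  G.deleteEdges {e | G.IsBridge e}

private lemma walk_closed' {V : Type*} {G : SimpleGraph V} {S : Set V}
    (hS : ∀ ⦃y⦄, y ∈ S → ∀ ⦃z⦄, G.Adj y z → z ∈ S) :
    ∀ {y z : V}, G.Walk y z → y ∈ S → z ∈ S := by
  intro y z p
  induction p with
  | nil => exact id
  | cons h q ih => intro hy; exact ih (hS hy h)

private lemma reach_closed' {V : Type*} {G : SimpleGraph V} {S : Set V}
    (hS : ∀ ⦃y⦄, y ∈ S → ∀ ⦃z⦄, G.Adj y z → z ∈ S) {y z : V}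
    (h : G.Reachable y z) (hy : y ∈ S) : z ∈ S :=
  h.elim fun p => walk_closed' hS p hy

private lemma triangle_not_bridge {V : Type*} {G : SimpleGraph V} {x y z : V}
    (hxy : G.Adj x y) (hyz : G.Adj y z) (hxz : G.Adj x z) : ¬ G.IsBridge s(x, z) := by
  rw [SimpleGraph.isBridge_iff]
  intro hnr
  apply hnr
  have h1 : (G.deleteEdges {s(x, z)}).Adj x y := by
    rw [SimpleGraph.deleteEdges_adj]
    refine ⟨hxy, ?_⟩
    simp only [Set.mem_singleton_iff, Sym2.eq_iff]
    rintro (⟨-, h⟩ | ⟨h, -⟩)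
    · exact hyz.ne h
    · exact hxz.ne h
  have h2 : (G.deleteEdges {s(x, z)}).Adj y z := by
    rw [SimpleGraph.deleteEdges_adj]
    refine ⟨hyz, ?_⟩
    simp only [Set.mem_singleton_iff, Sym2.eq_iff]
    rintro (⟨h, -⟩ | ⟨h, -⟩)
    · exact hxy.ne' h
    · exact hyz.ne h
  exact h1.reachable.trans h2.reachable

/-- Let `G` be a connected claw-free cubic graph and let `H` be a connected component of
`G - B(G)` with at least `5` vertices. Then the vertices of `H` having degree `2` in `H`
form an independent set in `G`. -/
theorem degree_two_vertices_independent {V : Type*} [Fintype V] [DecidableEq V]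
    (G : SimpleGraph V) [DecidableRel G.Adj]
    (hconn : G.Connected) (hcubic : ∀ x : V, G.degree x = 3) (hclawfree : IsClawFree G)
    (v : V) (hcard : 5 ≤ ((bridgeFree G).connectedComponentMk v).supp.ncard) :
    ∀ u w : V, u ∈ ((bridgeFree G).connectedComponentMk v).supp →
      w ∈ ((bridgeFree G).connectedComponentMk v).supp → u ≠ w →
      ((bridgeFree G).neighborSet u).ncard = 2 →
      ((bridgeFree G).neighborSet w).ncard = 2 → ¬ G.Adj u w := by
  intro u w hu hw hne hdu hdw hadj
  set B := bridgeFree G with hBdef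
  have hBadj : ∀ x y : V, B.Adj x y ↔ G.Adj x y ∧ ¬ G.IsBridge s(x, y) := by
    intro x y
    rw [hBdef, bridgeFree, SimpleGraph.deleteEdges_adj, Set.mem_setOf_eq]
  -- `u` and `w` are reachable in `B`
  have hr : B.Reachable u w := by
    have h1 := (B.connectedComponentMk v).mem_supp_iff u |>.1 hu
    have h2 := (B.connectedComponentMk v).mem_supp_iff w |>.1 hw
    exact SimpleGraph.ConnectedComponent.eq.1 (h1.trans h2.symm)
  -- `uw` is not a bridge
  have hnb_uw : ¬ G.IsBridge s(u, w) := by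
    intro hb
    have hle : B ≤ G.deleteEdges {s(u, w)} := by
      intro x y hxy
      rw [SimpleGraph.deleteEdges_adj]
      rw [hBadj] at hxy
      refine ⟨hxy.1, ?_⟩
      simp only [Set.mem_singleton_iff]
      intro h
      exact hxy.2 (h ▸ hb)
    exact (SimpleGraph.isBridge_iff.1 hb) (hr.mono hle)
  have hBuw : B.Adj u w := (hBadj u w).2 ⟨hadj, hnb_uw⟩
  -- neighbor set cardinalities in G
  have hG3 : ∀ x : V, (G.neighborSet x).ncard = 3 := by
    intro x
    rw [Set.ncard_eq_toFinset_card', Set.toFinset_card, G.card_neighborSet_eq_degree,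
      hcubic x]
  have hNsub : ∀ x : V, B.neighborSet x ⊆ G.neighborSet x := by
    intro x z hz
    exact ((hBadj x z).1 hz).1
  -- get the other B-neighbor `b` of `u`
  obtain ⟨b, hb_mem, hb_ne_w⟩ : ∃ b ∈ B.neighborSet u, b ≠ w := by
    by_contra h
    push_neg at h
    have hsub : B.neighborSet u ⊆ {w} := fun z hz => h z hz
    have := Set.ncard_le_ncard hsub (Set.finite_singleton w)
    rw [hdu, Set.ncard_singleton] at this
    omega
  have hBub : B.Adj u b := hb_mem
  have hGub : G.Adj u b := (hNsub u hb_mem)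
  -- get the bridge-neighbor `a` of `u`
  obtain ⟨a, ha_mem, ha_not⟩ : ∃ a ∈ G.neighborSet u, a ∉ B.neighborSet u := by
    by_contra h
    push_neg at h
    have := Set.ncard_le_ncard (fun z hz => h z hz : G.neighborSet u ⊆ B.neighborSet u)
      (Set.toFinite _)
    rw [hG3 u, hdu] at this
    omega
  have hGua : G.Adj u a := ha_mem
  have hbr_ua : G.IsBridge s(u, a) := by
    by_contra h
    exact ha_not ((hBadj u a).2 ⟨hGua, h⟩)
  have ha_ne_w : a ≠ w := fun h => ha_not (h ▸ (hBuw : w ∈ B.neighborSet u))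
  have ha_ne_b : a ≠ b := fun h => ha_not (h ▸ hb_mem)
  have ha_ne_u : a ≠ u := hGua.ne'
  have hb_ne_u : b ≠ u := hGub.ne'
  -- claw-freeness: `w` and `b` are adjacent
  have hwb : G.Adj w b := by
    by_cases h1 : G.Adj w a
    · exact absurd hbr_ua (triangle_not_bridge hadj h1 hGua)
    by_cases h2 : G.Adj a b
    · exact absurd hbr_ua (triangle_not_bridge hGub h2.symm hGua)
    by_cases h3 : G.Adj w b
    · exact h3
    exact absurd ⟨u, w, a, b, (Ne.symm ha_ne_w), (Ne.symm hb_ne_w), ha_ne_b, hadj, hGua,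
      hGub, h1, h3, h2⟩ hclawfree
  have hBwb : B.Adj w b := (hBadj w b).2 ⟨hwb, triangle_not_bridge hadj.symm hGub hwb⟩
  -- B-neighbor sets of u and w
  have hNu : B.neighborSet u = {w, b} := by
    refine (Set.eq_of_subset_of_ncard_le ?_ ?_ (Set.toFinite _)).symm
    · rintro z (rfl | rfl)
      · exact hBuw
      · exact hBub
    · rw [hdu, Set.ncard_pair (Ne.symm hb_ne_w)]
  have hNw : B.neighborSet w = {u, b} := by
    refine (Set.eq_of_subset_of_ncard_le ?_ ?_ (Set.toFinite _)).symm
    · rintro z (rfl | rfl)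
      · exact hBuw.symm
      · exact hBwb
    · rw [hdw, Set.ncard_pair (Ne.symm hb_ne_u)]
  -- G-neighbor set of u
  have hMu : G.neighborSet u = {w, a, b} := by
    refine (Set.eq_of_subset_of_ncard_le ?_ ?_ (Set.toFinite _)).symm
    · rintro z (rfl | rfl | rfl)
      · exact hadj
      · exact hGua
      · exact hGub
    · rw [hG3 u, Set.ncard_insert_of_notMem (by simp [Ne.symm ha_ne_w, Ne.symm hb_ne_w]),
        Set.ncard_pair ha_ne_b]
  -- the bridge-neighbor `c` of `w`
  obtain ⟨c, hc_mem, hc_ne_u, hc_ne_b⟩ :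
      ∃ c ∈ G.neighborSet w, c ≠ u ∧ c ≠ b := by
    by_contra h
    push_neg at h
    have hsub : G.neighborSet w ⊆ {u, b} := by
      intro z hz
      rcases Classical.em (z = u) with rfl | h1
      · exact Set.mem_insert _ _
      · exact Or.inr (h z hz h1)
    have := Set.ncard_le_ncard hsub (Set.toFinite _)
    rw [hG3 w, Set.ncard_pair (Ne.symm hb_ne_u)] at this
    omega
  have hGwc : G.Adj w c := hc_mem
  have hbr_wc : G.IsBridge s(w, c) := by
    by_contra h
    have : c ∈ B.neighborSet w := (hBadj w c).2 ⟨hGwc, h⟩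
    rw [hNw] at this
    rcases this with rfl | rfl
    · exact hc_ne_u rfl
    · exact hc_ne_b rfl
  have hc_ne_w : c ≠ w := hGwc.ne'
  have hMw : G.neighborSet w = {u, b, c} := by
    refine (Set.eq_of_subset_of_ncard_le ?_ ?_ (Set.toFinite _)).symm
    · rintro z (rfl | rfl | rfl)
      · exact hadj.symm
      · exact hwb
      · exact hGwc
    · rw [hG3 w, Set.ncard_insert_of_notMem (by simp [Ne.symm hb_ne_u, Ne.symm hc_ne_u]),
        Set.ncard_pair (Ne.symm hc_ne_b)]
  -- the third neighbor `t` of `b`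
  obtain ⟨t, ht_mem, ht_ne_u, ht_ne_w⟩ :
      ∃ t ∈ G.neighborSet b, t ≠ u ∧ t ≠ w := by
    by_contra h
    push_neg at h
    have hsub : G.neighborSet b ⊆ {u, w} := by
      intro z hz
      rcases Classical.em (z = u) with rfl | h1
      · exact Set.mem_insert _ _
      · exact Or.inr (h z hz h1)
    have := Set.ncard_le_ncard hsub (Set.toFinite _)
    rw [hG3 b, Set.ncard_pair hne] at this
    omega
  have hGbt : G.Adj b t := ht_mem
  have ht_ne_b : t ≠ b := hGbt.ne'
  have hMb : G.neighborSet b = {u, w, t} := by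
    refine (Set.eq_of_subset_of_ncard_le ?_ ?_ (Set.toFinite _)).symm
    · rintro z (rfl | rfl | rfl)
      · exact hGub.symm
      · exact hwb.symm
      · exact hGbt
    · rw [hG3 b, Set.ncard_insert_of_notMem (by simp [hne, Ne.symm ht_ne_u]),
        Set.ncard_pair (Ne.symm ht_ne_w)]
  by_cases hBbt : B.Adj b t
  · -- `bt` would be a non-bridge, but we show it is a bridge: contradiction
    have hnb_bt : ¬ G.IsBridge s(b, t) := ((hBadj b t).1 hBbt).2
    apply hnb_bt
    rw [SimpleGraph.isBridge_iff]
    intro hreach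
    -- invariant set
    set S : Set V := {y | y = u ∨ y = w ∨ y = b ∨
      (G.deleteEdges {s(u, a)}).Reachable a y ∨
      (G.deleteEdges {s(w, c)}).Reachable c y} with hSdef
    have hnoRua : ¬ (G.deleteEdges {s(u, a)}).Reachable u a :=
      (SimpleGraph.isBridge_iff.1 hbr_ua)
    have hnoRwc : ¬ (G.deleteEdges {s(w, c)}).Reachable w c :=
      (SimpleGraph.isBridge_iff.1 hbr_wc)
    have hclosed : ∀ ⦃y⦄, y ∈ S → ∀ ⦃z⦄, (G.deleteEdges {s(b, t)}).Adj y z → z ∈ S := by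
      intro y hy z hz
      obtain ⟨hGyz, hne_bt⟩ := SimpleGraph.deleteEdges_adj.1 hz
      simp only [Set.mem_singleton_iff] at hne_bt
      simp only [hSdef, Set.mem_setOf_eq] at hy ⊢
      rcases hy with hy | hy | hy | hra | hrc
      · -- y = u
        have hm : z ∈ G.neighborSet u := hy ▸ hGyz
        rw [hMu] at hm
        rcases hm with hm | hm | hm
        · exact Or.inr (Or.inl hm)
        · refine Or.inr (Or.inr (Or.inr (Or.inl ?_)))
          rw [hm]
        · exact Or.inr (Or.inr (Or.inl hm))
      · -- y = w
        have hm : z ∈ G.neighborSet w := hy ▸ hGyz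
        rw [hMw] at hm
        rcases hm with hm | hm | hm
        · exact Or.inl hm
        · exact Or.inr (Or.inr (Or.inl hm))
        · refine Or.inr (Or.inr (Or.inr (Or.inr ?_)))
          rw [hm]
      · -- y = b
        have hm : z ∈ G.neighborSet b := hy ▸ hGyz
        rw [hMb] at hm
        rcases hm with hm | hm | hm
        · exact Or.inl hm
        · exact Or.inr (Or.inl hm)
        · exact absurd (by rw [hy, hm]) hne_bt
      · -- reachable from a
        by_cases heq : s(y, z) = s(u, a)
        · rw [Sym2.eq_iff] at heq
          rcases heq with ⟨h1, h2⟩ | ⟨h1, h2⟩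
          · exact absurd (h1 ▸ hra).symm hnoRua
          · exact Or.inl h2
        · have hadj' : (G.deleteEdges {s(u, a)}).Adj y z := by
            rw [SimpleGraph.deleteEdges_adj]
            exact ⟨hGyz, by simpa using heq⟩
          exact Or.inr (Or.inr (Or.inr (Or.inl (hra.trans hadj'.reachable))))
      · -- reachable from c
        by_cases heq : s(y, z) = s(w, c)
        · rw [Sym2.eq_iff] at heq
          rcases heq with ⟨h1, h2⟩ | ⟨h1, h2⟩
          · exact absurd (h1 ▸ hrc).symm hnoRwc
          · exact Or.inr (Or.inl h2)
        · have hadj' : (G.deleteEdges {s(w, c)}).Adj y z := by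
            rw [SimpleGraph.deleteEdges_adj]
            exact ⟨hGyz, by simpa using heq⟩
          exact Or.inr (Or.inr (Or.inr (Or.inr (hrc.trans hadj'.reachable))))
    have hbS : b ∈ S := by
      simp [hSdef]
    have htS : t ∈ S := reach_closed' hclosed hreach hbS
    -- but t is in none of the pieces
    have h_ub : (G.deleteEdges {s(u, a)}).Adj u b := by
      rw [SimpleGraph.deleteEdges_adj]
      refine ⟨hGub, ?_⟩
      simp only [Set.mem_singleton_iff, Sym2.eq_iff]
      push_neg
      exact ⟨fun _ => Ne.symm ha_ne_b, fun h => absurd h (Ne.symm ha_ne_u)⟩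
    have h_bt1 : (G.deleteEdges {s(u, a)}).Adj b t := by
      rw [SimpleGraph.deleteEdges_adj]
      refine ⟨hGbt, ?_⟩
      simp only [Set.mem_singleton_iff, Sym2.eq_iff]
      push_neg
      exact ⟨fun h => absurd h hb_ne_u, fun h => absurd h (Ne.symm ha_ne_b)⟩
    have h_wb : (G.deleteEdges {s(w, c)}).Adj w b := by
      rw [SimpleGraph.deleteEdges_adj]
      refine ⟨hwb, ?_⟩
      simp only [Set.mem_singleton_iff, Sym2.eq_iff]
      push_neg
      exact ⟨fun _ => Ne.symm hc_ne_b, fun h => absurd h (Ne.symm hc_ne_w)⟩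
    have h_bt2 : (G.deleteEdges {s(w, c)}).Adj b t := by
      rw [SimpleGraph.deleteEdges_adj]
      refine ⟨hGbt, ?_⟩
      simp only [Set.mem_singleton_iff, Sym2.eq_iff]
      push_neg
      exact ⟨fun h => absurd h hb_ne_w, fun h => absurd h (Ne.symm hc_ne_b)⟩
    simp only [hSdef, Set.mem_setOf_eq] at htS
    rcases htS with h | h | h | hra | hrc
    · exact ht_ne_u h
    · exact ht_ne_w h
    · exact ht_ne_b h
    · exact hnoRua ((h_ub.reachable.trans h_bt1.reachable).trans hra.symm)
    · exact hnoRwc ((h_wb.reachable.trans h_bt2.reachable).trans hrc.symm)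
  · -- the whole component is `{u, w, b}`, contradicting its size
    have hclosed : ∀ ⦃y⦄, y ∈ ({u, w, b} : Set V) → ∀ ⦃z⦄, B.Adj y z →
        z ∈ ({u, w, b} : Set V) := by
      intro y hy z hz
      rcases hy with hy | hy | hy
      · have hm : z ∈ B.neighborSet u := by rw [← hy]; exact hz
        rw [hNu] at hm
        rcases hm with hm | hm
        · exact Or.inr (Or.inl hm)
        · exact Or.inr (Or.inr hm)
      · have hm : z ∈ B.neighborSet w := by rw [← hy]; exact hz
        rw [hNw] at hm
        rcases hm with hm | hm
        · exact Or.inl hm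
        · exact Or.inr (Or.inr hm)
      · have hm : z ∈ G.neighborSet b := by rw [← hy]; exact hNsub y hz
        rw [hMb] at hm
        rcases hm with hm | hm | hm
        · exact Or.inl hm
        · exact Or.inr (Or.inl hm)
        · exact absurd (by rw [hy, hm] at hz; exact hz) hBbt
    have hsupp : (B.connectedComponentMk v).supp ⊆ ({u, w, b} : Set V) := by
      intro y hy
      have h1 := (B.connectedComponentMk v).mem_supp_iff u |>.1 hu
      have h2 := (B.connectedComponentMk v).mem_supp_iff y |>.1 hy
      have hruy : B.Reachable u y := SimpleGraph.ConnectedComponent.eq.1 (h1.trans h2.symm)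
      exact reach_closed' hclosed hruy (Or.inl rfl)
    have hle := Set.ncard_le_ncard hsupp (Set.toFinite _)
    have h3 : ({u, w, b} : Set V).ncard ≤ 3 := by
      refine le_trans (Set.ncard_insert_le _ _) ?_
      have := Set.ncard_insert_le w ({b} : Set V)
      rw [Set.ncard_singleton] at this
      omega
    omega
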